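/- Let A → R be a ring extension. If for every homomorphism of right R-modules f : P → R* with P finitely generated projective over A, the kernel of f admits a surjection from a direct sum of right R-modules each finitely generated projective over A, then the canonical map ζ : R° → R* is injective. -/

import Mathlib

open MulOpposite

universe u

variable (A R : Type u) [Ring A] [Ring R] (φ : A →+* R)

/-- An object of the category `𝒜_R`: a right `R`-module (encoded as a module
over `Rᵐᵒᵖ`) which, via restriction of scalars along `φ`, is finitely generated
and projective as a right `A`-module. -/
structure FDObj : Type (u + 1) where
  carrier : Type u
  [acg : AddCommGroup carrier]
  [modR : Module Rᵐᵒᵖ carrier]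
  [modA : Module Aᵐᵒᵖ carrier]
  compat : ∀ (a : Aᵐᵒᵖ) (x : carrier), a • x = (RingHom.op φ a) • x
  fin : Module.Finite Aᵐᵒᵖ carrier
  proj : Module.Projective Aᵐᵒᵖ carrier

attribute [instance] FDObj.acg FDObj.modR FDObj.modA

variable {A R φ}

/-- The right `A`-linear dual of an object `P` of `𝒜_R`. -/
abbrev FDObj.dual (P : FDObj A R φ) : Type u := P.carrier →ₗ[Aᵐᵒᵖ] A

/-- Composition of a dual element with a right `R`-linear map, `q* ↦ q* ∘ t`. -/
def FDObj.compDual {P Q : FDObj A R φ} (t : P.carrier →ₗ[Rᵐᵒᵖ] Q.carrier)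
    (g : Q.dual) : P.dual where
  toFun := fun p => g (t p)
  map_add' := by intro p q; simp
  map_smul' := by
    intro a p
    simp only [RingHom.id_apply]
    rw [P.compat a p, map_smul, ← Q.compat a (t p), map_smul]

variable (A R φ)

/-- Generators of the finite dual: triples `(P, p*, p)`. -/
def FDGen : Type (u + 1) := Σ P : FDObj A R φ, P.dual × P.carrier

/-- The relations defining the finite dual coring `R°`: additivity in each tensor slot
(yielding the tensor products `P* ⊗_{T_P} P`) together with the relations
`q* ⊗ t·p − q*·t ⊗ p` for right `R`-linear maps `t : P → Q`. -/
def FDRel : Set (FreeAbelianGroup (FDGen A R φ)) :=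
  { x | (∃ (P : FDObj A R φ) (f g : P.dual) (p : P.carrier),
          x = FreeAbelianGroup.of ⟨P, (f + g, p)⟩
              - FreeAbelianGroup.of ⟨P, (f, p)⟩ - FreeAbelianGroup.of ⟨P, (g, p)⟩) ∨
        (∃ (P : FDObj A R φ) (f : P.dual) (p q : P.carrier),
          x = FreeAbelianGroup.of ⟨P, (f, p + q)⟩
              - FreeAbelianGroup.of ⟨P, (f, p)⟩ - FreeAbelianGroup.of ⟨P, (f, q)⟩) ∨
        (∃ (P Q : FDObj A R φ) (t : P.carrier →ₗ[Rᵐᵒᵖ] Q.carrier)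
            (g : Q.dual) (p : P.carrier),
          x = FreeAbelianGroup.of ⟨Q, (g, t p)⟩
              - FreeAbelianGroup.of ⟨P, (FDObj.compDual t g, p)⟩) }

/-- The right finite dual `R°` of the ring extension `φ : A → R`, as an abelian group. -/
def FinDual : Type (u + 1) :=
  FreeAbelianGroup (FDGen A R φ) ⧸ AddSubgroup.closure (FDRel A R φ)

noncomputable instance : AddCommGroup (FinDual A R φ) :=
  QuotientAddGroup.Quotient.addCommGroup _

/-- The right `A`-linear dual `R* = Hom_A(R, A)` of `R` (as a right `A`-module via `φ`),
realized as the additive subgroup of `R →+ A` of right `A`-linear maps. -/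
def RStar : AddSubgroup (R →+ A) where
  carrier := { f | ∀ (r : R) (a : A), f (r * φ a) = f r * a }
  add_mem' := by
    intro f g hf hg r a
    simp [hf r a, hg r a, add_mul]
  zero_mem' := by intro r a; simp
  neg_mem' := by
    intro f hf r a
    simp [hf r a, neg_mul]

/-- The functional `ζ(p* ⊗ p) : r ↦ p*(p·r)` attached to a generator. -/
def zetaGen (g : FDGen A R φ) : R →+ A where
  toFun := fun r => g.2.1 ((op r : Rᵐᵒᵖ) • g.2.2)
  map_zero' := by simp
  map_add' := by
    intro r s
    show g.2.1 ((op (r + s) : Rᵐᵒᵖ) • g.2.2) = _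
    rw [op_add, add_smul, map_add]

lemma zetaGen_mem (g : FDGen A R φ) : zetaGen A R φ g ∈ RStar A R φ := by
  intro r a
  have h1 : (op (r * φ a) : Rᵐᵒᵖ) = (RingHom.op φ (op a)) * op r := rfl
  have h2 : ((RingHom.op φ (op a)) * op r) • g.2.2
      = (RingHom.op φ (op a)) • ((op r : Rᵐᵒᵖ) • g.2.2) := mul_smul _ _ _
  have h3 : (RingHom.op φ (op a)) • ((op r : Rᵐᵒᵖ) • g.2.2)
      = (op a : Aᵐᵒᵖ) • ((op r : Rᵐᵒᵖ) • g.2.2) := (g.1.compat (op a) _).symm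
  show g.2.1 ((op (r * φ a) : Rᵐᵒᵖ) • g.2.2) = g.2.1 ((op r : Rᵐᵒᵖ) • g.2.2) * a
  rw [h1, h2, h3, map_smul]
  rfl

/-- `ζ` on the free abelian group on generators. -/
noncomputable def zetaHat : FreeAbelianGroup (FDGen A R φ) →+ ↥(RStar A R φ) :=
  FreeAbelianGroup.lift (fun g => ⟨zetaGen A R φ g, zetaGen_mem A R φ g⟩)

lemma FDRel_le_ker : AddSubgroup.closure (FDRel A R φ) ≤ (zetaHat A R φ).ker := by
  rw [AddSubgroup.closure_le]
  rintro x hx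
  simp only [SetLike.mem_coe, AddMonoidHom.mem_ker]
  obtain (⟨P, f, g, p, rfl⟩ | ⟨P, f, p, q, rfl⟩ | ⟨P, Q, t, g, p, rfl⟩) := hx
  · rw [map_sub, map_sub, sub_sub, sub_eq_zero]
    apply Subtype.ext; apply AddMonoidHom.ext; intro r
    simp only [zetaHat, AddSubgroup.coe_add, AddMonoidHom.add_apply]
    erw [FreeAbelianGroup.lift_apply_of, FreeAbelianGroup.lift_apply_of,
      FreeAbelianGroup.lift_apply_of]
    simp only [zetaGen, AddMonoidHom.coe_mk, ZeroHom.coe_mk,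
      LinearMap.add_apply]
    rfl
  · rw [map_sub, map_sub, sub_sub, sub_eq_zero]
    apply Subtype.ext; apply AddMonoidHom.ext; intro r
    simp only [zetaHat, AddSubgroup.coe_add, AddMonoidHom.add_apply]
    erw [FreeAbelianGroup.lift_apply_of, FreeAbelianGroup.lift_apply_of,
      FreeAbelianGroup.lift_apply_of]
    simp only [zetaGen, AddMonoidHom.coe_mk, ZeroHom.coe_mk,
      smul_add, map_add]
    exact f.map_add _ _
  · rw [map_sub, sub_eq_zero]
    apply Subtype.ext; apply AddMonoidHom.ext; intro r
    simp only [zetaHat]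
    erw [FreeAbelianGroup.lift_apply_of, FreeAbelianGroup.lift_apply_of]
    simp only [zetaGen, AddMonoidHom.coe_mk,
      ZeroHom.coe_mk, FDObj.compDual, LinearMap.coe_mk, AddHom.coe_mk]
    exact congrArg g (t.map_smul (MulOpposite.op r) p).symm

/-- The canonical map `ζ : R° → R*`. -/
noncomputable def zeta : FinDual A R φ →+ ↥(RStar A R φ) :=
  QuotientAddGroup.lift _ (zetaHat A R φ) (FDRel_le_ker A R φ)


section Aux

variable {A R : Type u} [Ring A] [Ring R] {φ : A →+* R}

/-- The class of a generator in the finite dual. -/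
def FDcl (g : FDGen A R φ) : FinDual A R φ :=
  QuotientAddGroup.mk (FreeAbelianGroup.of g)

lemma FDcl_rel {x y : FreeAbelianGroup (FDGen A R φ)} (h : x - y ∈ FDRel A R φ) :
    (QuotientAddGroup.mk x : FinDual A R φ) = QuotientAddGroup.mk y :=
  (QuotientAddGroup.eq_iff_sub_mem).mpr (AddSubgroup.subset_closure h)

lemma FDcl_add_dual (P : FDObj A R φ) (f g : P.dual) (p : P.carrier) :
    FDcl (φ := φ) ⟨P, (f + g, p)⟩ = FDcl ⟨P, (f, p)⟩ + FDcl ⟨P, (g, p)⟩ := by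
  have h : (QuotientAddGroup.mk (FreeAbelianGroup.of (⟨P, (f + g, p)⟩ : FDGen A R φ)) :
      FinDual A R φ)
      = QuotientAddGroup.mk (FreeAbelianGroup.of (⟨P, (f, p)⟩ : FDGen A R φ)
          + FreeAbelianGroup.of (⟨P, (g, p)⟩ : FDGen A R φ)) := by
    apply FDcl_rel
    left
    exact ⟨P, f, g, p, (sub_add_eq_sub_sub _ _ _)⟩
  exact h

lemma FDcl_add_carrier (P : FDObj A R φ) (f : P.dual) (p q : P.carrier) :
    FDcl (φ := φ) ⟨P, (f, p + q)⟩ = FDcl ⟨P, (f, p)⟩ + FDcl ⟨P, (f, q)⟩ := by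
  have h : (QuotientAddGroup.mk (FreeAbelianGroup.of (⟨P, (f, p + q)⟩ : FDGen A R φ)) :
      FinDual A R φ)
      = QuotientAddGroup.mk (FreeAbelianGroup.of (⟨P, (f, p)⟩ : FDGen A R φ)
          + FreeAbelianGroup.of (⟨P, (f, q)⟩ : FDGen A R φ)) := by
    apply FDcl_rel
    right; left
    exact ⟨P, f, p, q, (sub_add_eq_sub_sub _ _ _)⟩
  exact h

lemma FDcl_comp (P Q : FDObj A R φ) (t : P.carrier →ₗ[Rᵐᵒᵖ] Q.carrier)
    (g : Q.dual) (p : P.carrier) :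
    FDcl (φ := φ) ⟨Q, (g, t p)⟩ = FDcl ⟨P, (FDObj.compDual t g, p)⟩ := by
  apply FDcl_rel
  right; right
  exact ⟨P, Q, t, g, p, rfl⟩

lemma FDcl_zero_dual (P : FDObj A R φ) (p : P.carrier) :
    FDcl (φ := φ) ⟨P, (0, p)⟩ = 0 := by
  have h := FDcl_add_dual P 0 0 p
  rw [add_zero] at h
  exact left_eq_add.mp h

lemma FDcl_zero_carrier (P : FDObj A R φ) (f : P.dual) :
    FDcl (φ := φ) ⟨P, (f, 0)⟩ = 0 := by
  have h := FDcl_add_carrier P f 0 0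
  rw [add_zero] at h
  exact left_eq_add.mp h

lemma FDcl_neg_dual (P : FDObj A R φ) (f : P.dual) (p : P.carrier) :
    FDcl (φ := φ) ⟨P, (-f, p)⟩ = - FDcl ⟨P, (f, p)⟩ := by
  have h := FDcl_add_dual P f (-f) p
  rw [add_neg_cancel, FDcl_zero_dual] at h
  exact eq_neg_of_add_eq_zero_right h.symm

end Aux

/-- The zero object of `𝒜_R`. -/
def FDObj.zeroObj (A R : Type u) [Ring A] [Ring R] (φ : A →+* R) : FDObj A R φ where
  carrier := PUnit
  compat := fun _ _ => Subsingleton.elim _ _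
  fin := inferInstance
  proj := inferInstance

section Prod

variable {A R : Type u} [Ring A] [Ring R] {φ : A →+* R}

/-- The product of two objects of `𝒜_R`. -/
def FDObj.prodObj (P Q : FDObj A R φ) : FDObj A R φ where
  carrier := P.carrier × Q.carrier
  compat := fun a x => Prod.ext (P.compat a x.1) (Q.compat a x.2)
  fin := by haveI := P.fin; haveI := Q.fin; infer_instance
  proj := by haveI := P.proj; haveI := Q.proj; infer_instance

lemma FDcl_exists_rep (z : FinDual A R φ) :
    ∃ (P : FDObj A R φ) (f : P.dual) (p : P.carrier), z = FDcl ⟨P, (f, p)⟩ := by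
  obtain ⟨w, rfl⟩ := QuotientAddGroup.mk_surjective z
  induction w using FreeAbelianGroup.induction_on with
  | zero =>
    refine ⟨FDObj.zeroObj A R φ, 0, 0, ?_⟩
    rw [FDcl_zero_dual]
    rfl
  | of g => exact ⟨g.1, g.2.1, g.2.2, rfl⟩
  | neg g _ =>
    refine ⟨g.1, -g.2.1, g.2.2, ?_⟩
    rw [FDcl_neg_dual]
    rfl
  | add x y ihx ihy =>
    obtain ⟨P₁, f₁, p₁, h₁⟩ := ihx
    obtain ⟨P₂, f₂, p₂, h₂⟩ := ihy
    set P := FDObj.prodObj P₁ P₂ with hP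
    let ι₁ : P₁.carrier →ₗ[Rᵐᵒᵖ] P.carrier := LinearMap.inl Rᵐᵒᵖ P₁.carrier P₂.carrier
    let ι₂ : P₂.carrier →ₗ[Rᵐᵒᵖ] P.carrier := LinearMap.inr Rᵐᵒᵖ P₁.carrier P₂.carrier
    let f : P.dual :=
      f₁.comp (LinearMap.fst Aᵐᵒᵖ P₁.carrier P₂.carrier)
        + f₂.comp (LinearMap.snd Aᵐᵒᵖ P₁.carrier P₂.carrier)
    refine ⟨P, f, (p₁, p₂), ?_⟩
    have e1 : FDcl (φ := φ) ⟨P, (f, ((p₁, p₂) : P.carrier))⟩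
        = FDcl ⟨P, (f, ι₁ p₁)⟩ + FDcl ⟨P, (f, ι₂ p₂)⟩ := by
      have : ((p₁, p₂) : P.carrier) = ι₁ p₁ + ι₂ p₂ :=
        Prod.ext (add_zero p₁).symm (zero_add p₂).symm
      rw [this, FDcl_add_carrier]
    have e2 : FDObj.compDual ι₁ f = f₁ := by
      apply LinearMap.ext; intro a
      show f₁ a + f₂ (0 : P₂.carrier) = f₁ a
      rw [map_zero, add_zero]
    have e3 : FDObj.compDual ι₂ f = f₂ := by
      apply LinearMap.ext; intro a
      show f₁ (0 : P₁.carrier) + f₂ a = f₂ a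
      rw [map_zero, zero_add]
    rw [e1, FDcl_comp P₁ P ι₁ f p₁, FDcl_comp P₂ P ι₂ f p₂, e2, e3]
    show QuotientAddGroup.mk (x + y) = _
    rw [QuotientAddGroup.mk_add]
    exact congrArg₂ (· + ·) h₁ h₂

end Prod


open DirectSum in
/-- Let `A → R` be a ring extension.  If for every homomorphism of right
`R`-modules `f : P → R*` with `P` finitely generated projective over `A`, the kernel of `f`
admits a surjection from a direct sum of right `R`-modules each finitely generated projective
over `A`, then the canonical map `ζ : R° → R*` is injective. -/
theorem zeta_injective_of_kernels_covered
    (A R : Type u) [Ring A] [Ring R] (φ : A →+* R)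
    (hker : ∀ (P : FDObj A R φ) (f : P.carrier → ↥(RStar A R φ)),
      (∀ p q : P.carrier, f (p + q) = f p + f q) →
      (∀ (r : R) (p : P.carrier) (s : R),
          (f ((op r : Rᵐᵒᵖ) • p) : R →+ A) s = (f p : R →+ A) (r * s)) →
      ∃ (ι : Type u) (_ : DecidableEq ι) (Q : ι → FDObj A R φ)
        (g : (⨁ i : ι, (Q i).carrier) → P.carrier),
        (∀ x y, g (x + y) = g x + g y) ∧
        (∀ (r : Rᵐᵒᵖ) (x : ⨁ i : ι, (Q i).carrier), g (r • x) = r • g x) ∧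
        Set.range g = { p : P.carrier | f p = 0 }) :
    Function.Injective (zeta A R φ) := by
  rw [injective_iff_map_eq_zero]
  intro z hz
  obtain ⟨P, f, p, rfl⟩ := FDcl_exists_rep z
  set F : P.carrier → ↥(RStar A R φ) :=
    fun q => ⟨zetaGen A R φ ⟨P, (f, q)⟩, zetaGen_mem A R φ ⟨P, (f, q)⟩⟩ with hF
  have hzeta : ∀ q : P.carrier, zeta A R φ (FDcl ⟨P, (f, q)⟩) = F q := by
    intro q
    show zetaHat A R φ (FreeAbelianGroup.of ⟨P, (f, q)⟩) = F q
    exact FreeAbelianGroup.lift_apply_of _ _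
  have hadd : ∀ p q : P.carrier, F (p + q) = F p + F q := by
    intro p q
    apply Subtype.ext; apply AddMonoidHom.ext; intro r
    show f ((op r : Rᵐᵒᵖ) • (p + q)) = f ((op r : Rᵐᵒᵖ) • p) + f ((op r : Rᵐᵒᵖ) • q)
    rw [smul_add, map_add]
  have hlin : ∀ (r : R) (p : P.carrier) (s : R),
      (F ((op r : Rᵐᵒᵖ) • p) : R →+ A) s = (F p : R →+ A) (r * s) := by
    intro r p s
    show f ((op s : Rᵐᵒᵖ) • (op r : Rᵐᵒᵖ) • p) = f ((op (r * s) : Rᵐᵒᵖ) • p)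
    rw [← mul_smul]
    rfl
  obtain ⟨ι, dec, Q, g, hgadd, hgsmul, hgrange⟩ := hker P F hadd hlin
  have hFp : F p = 0 := by rw [← hzeta p]; exact hz
  have hp : p ∈ Set.range g := by rw [hgrange]; exact hFp
  obtain ⟨x, hx⟩ := hp
  have key : ∀ x : ⨁ i : ι, (Q i).carrier, FDcl (φ := φ) ⟨P, (f, g x)⟩ = 0 := by
    intro x
    induction x using DirectSum.induction_on with
    | zero =>
      have hg0 : g 0 = 0 := by
        have h := hgadd 0 0
        rw [add_zero] at h
        exact left_eq_add.mp h
      rw [hg0]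
      exact FDcl_zero_carrier P f
    | of i q =>
      let t : (Q i).carrier →ₗ[Rᵐᵒᵖ] P.carrier :=
        { toFun := fun a => g (DirectSum.lof Rᵐᵒᵖ ι (fun j => (Q j).carrier) i a)
          map_add' := fun a b => by rw [map_add, hgadd]
          map_smul' := fun r a => by rw [map_smul, hgsmul]; rfl }
      have h1 : g (DirectSum.of (fun j => (Q j).carrier) i q) = t q := by
        show g _ = g _
        rw [DirectSum.lof_eq_of]
      have h2 : FDObj.compDual t f = 0 := by
        apply LinearMap.ext; intro a
        show f (t a) = 0
        have hmem : t a ∈ Set.range g := ⟨_, rfl⟩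
        rw [hgrange] at hmem
        have h3 := congrArg (fun h : ↥(RStar A R φ) => (h : R →+ A) 1) hmem
        have h4 : f ((op (1 : R) : Rᵐᵒᵖ) • t a) = ((0 : ↥(RStar A R φ)) : R →+ A) 1 := h3
        simpa using h4
      rw [h1, FDcl_comp (Q i) P t f q, h2]
      exact FDcl_zero_dual (Q i) q
    | add x y ihx ihy =>
      rw [hgadd, FDcl_add_carrier, ihx, ihy, add_zero]
  rw [← hx]
  exact key x
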